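/- Every finitely generated abelian group of orientation-preserving homeomorphisms of an open interval I without global fixed points in I preserves a Radon measure on I, and any two such invariant Radon measures give translation number homomorphisms that agree up to multiplication by a positive real constant. -/

import Mathlib

open MeasureTheory Set

namespace Stmt16Aux

variable {G : Type} [CommGroup G] (F : G →* Equiv.Perm ℝ)

lemma Fmul (g h : G) (x : ℝ) : F (g * h) x = F g (F h x) := by
  rw [map_mul]; rfl

lemma Fone (x : ℝ) : F 1 x = x := by rw [map_one]; rfl

lemma Fcomm (g h : G) (x : ℝ) : F g (F h x) = F h (F g x) := by
  rw [← Fmul, ← Fmul, mul_comm]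

lemma Finv_apply (g : G) (x : ℝ) : F g⁻¹ (F g x) = x := by
  rw [← Fmul, inv_mul_cancel, Fone]

variable (hmono : ∀ g : G, StrictMono (F g))
include hmono

lemma F_le_iff (g : G) (x y : ℝ) : F g x ≤ y ↔ x ≤ F g⁻¹ y := by
  constructor
  · intro h
    have := (hmono g⁻¹).monotone h
    rwa [Finv_apply] at this
  · intro h
    have := (hmono g).monotone h
    rwa [Fcomm, Finv_apply] at this

lemma F_lt_iff (g : G) (x y : ℝ) : F g x < y ↔ x < F g⁻¹ y := by
  rw [← not_le, ← not_le, F_le_iff F hmono g⁻¹, inv_inv]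

lemma Fcont (g : G) : Continuous (F g) := by
  have h := (StrictMono.orderIsoOfSurjective (F g) (hmono g) (F g).surjective).toHomeomorph.continuous
  exact h

/-- iterate comparison for commuting maps -/
lemma iter_le {g h : G} {x : ℝ} (hle : F g x ≤ F h x) :
    ∀ n : ℕ, F (g ^ n) x ≤ F (h ^ n) x := by
  intro n
  induction n with
  | zero => simp
  | succ n ih =>
    have h1 : F g (F (g ^ n) x) ≤ F g (F (h ^ n) x) := (hmono g).monotone ih
    have h2 : F g (F (h ^ n) x) = F (h ^ n) (F g x) := Fcomm F g (h ^ n) x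
    have h3 : F (h ^ n) (F g x) ≤ F (h ^ n) (F h x) := (hmono (h ^ n)).monotone hle
    calc F (g ^ (n + 1)) x = F g (F (g ^ n) x) := by rw [← Fmul, pow_succ']
    _ ≤ F (h ^ n) (F h x) := by rw [h2] at h1; exact le_trans h1 h3
    _ = F (h ^ (n + 1)) x := by rw [← Fmul, pow_succ]

omit hmono in
/-- the fixed set of any `g` is invariant under each `h` -/
lemma fix_inv_subset (g h : G) : F h '' {y | F g y = y} ⊆ {y | F g y = y} := by
  rintro - ⟨y, hy, rfl⟩
  simp only [mem_setOf_eq] at hy ⊢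
  rw [Fcomm, hy]

omit hmono in
lemma fix_invariant (g h : G) : F h '' {y | F g y = y} = {y | F g y = y} := by
  apply subset_antisymm (fix_inv_subset F g h)
  intro y hy
  refine ⟨F h⁻¹ y, ?_, by rw [Fcomm, Finv_apply]⟩
  have := fix_inv_subset F g h⁻¹ ⟨y, hy, rfl⟩
  exact this

variable (hnofix : ∀ x : ℝ, ∃ g : G, F g x ≠ x)
include hnofix

lemma fix_not_bddAbove (g : G) (hne : {y | F g y = y}.Nonempty) :
    ¬ BddAbove {y | F g y = y} := by
  intro hbdd
  set A := {y | F g y = y} with hA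
  obtain ⟨h, hh⟩ := hnofix (sSup A)
  apply hh
  have := Monotone.map_csSup_of_continuousAt ((Fcont F hmono h).continuousAt)
    (hmono h).monotone hne hbdd
  rw [this, fix_invariant]

lemma fix_not_bddBelow (g : G) (hne : {y | F g y = y}.Nonempty) :
    ¬ BddBelow {y | F g y = y} := by
  intro hbdd
  set A := {y | F g y = y} with hA
  obtain ⟨h, hh⟩ := hnofix (sInf A)
  apply hh
  have := Monotone.map_csInf_of_continuousAt ((Fcont F hmono h).continuousAt)
    (hmono h).monotone hne hbdd
  rw [this, fix_invariant]

omit hnofix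

lemma step_lemma (S : Finset G) (h : G) (x : ℝ) (hfix : ∀ g ∈ S, F g x = x)
    (hhx : x ≤ F h x) {y : ℝ} (hy : F h y = y) (hxy : x ≤ y) :
    ∃ z, F h z = z ∧ ∀ g ∈ S, F g z = z := by
  set u : ℕ → ℝ := fun n => F (h ^ n) x with hu
  have hu0 : u 0 = x := by simp [hu, Fone]
  have husucc : ∀ n, u (n + 1) = F h (u n) := by
    intro n; simp only [hu]; rw [← Fmul, pow_succ']
  have hufix : ∀ g ∈ S, ∀ n, F g (u n) = u n := by
    intro g hg n
    simp only [hu]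
    rw [Fcomm, hfix g hg]
  have humono : Monotone u := by
    apply monotone_nat_of_le_succ
    intro n
    rw [husucc]
    calc u n = F (h ^ n) x := rfl
    _ ≤ F (h ^ n) (F h x) := (hmono (h ^ n)).monotone hhx
    _ = F h (u n) := Fcomm F (h ^ n) h x
  have hub : ∀ n, u n ≤ y := by
    intro n
    induction n with
    | zero => rw [hu0]; exact hxy
    | succ n ih =>
      rw [husucc]
      calc F h (u n) ≤ F h y := (hmono h).monotone ih
      _ = y := hy
  have hne : (Set.range u).Nonempty := ⟨u 0, 0, rfl⟩
  have hbdd : BddAbove (Set.range u) := ⟨y, by rintro - ⟨n, rfl⟩; exact hub n⟩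
  refine ⟨sSup (Set.range u), ?_, ?_⟩
  · have hmap := Monotone.map_csSup_of_continuousAt ((Fcont F hmono h).continuousAt)
      (hmono h).monotone hne hbdd
    rw [hmap]
    have hcomp : (⇑(F h)) ∘ u = fun n => u (n + 1) := by
      funext n
      exact (husucc n).symm
    have himg : F h '' Set.range u = Set.range (fun n => u (n + 1)) := by
      rw [← Set.range_comp, hcomp]
    rw [himg]
    have hne2 : (Set.range (fun n => u (n + 1))).Nonempty := ⟨u 1, 0, rfl⟩
    have hbdd2 : BddAbove (Set.range (fun n => u (n + 1))) :=
      ⟨y, by rintro - ⟨m, rfl⟩; exact hub (m+1)⟩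
    apply le_antisymm
    · apply csSup_le hne2
      rintro - ⟨n, rfl⟩
      exact le_csSup hbdd ⟨n + 1, rfl⟩
    · apply csSup_le hne
      rintro - ⟨n, rfl⟩
      calc u n ≤ u (n + 1) := humono (Nat.le_succ n)
      _ ≤ _ := le_csSup hbdd2 ⟨n, rfl⟩
  · intro g hg
    have hmap := Monotone.map_csSup_of_continuousAt ((Fcont F hmono g).continuousAt)
      (hmono g).monotone hne hbdd
    rw [hmap]
    have hcomp : (⇑(F g)) ∘ u = u := by
      funext n
      exact hufix g hg n
    rw [← Set.range_comp, hcomp]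

include hnofix

lemma finset_fixed (hall : ∀ g : G, ∃ y, F g y = y) :
    ∀ S : Finset G, ∃ x, ∀ g ∈ S, F g x = x := by
  classical
  intro S
  induction S using Finset.induction_on with
  | empty => exact ⟨0, by simp⟩
  | insert h S hnotmem ih =>
    obtain ⟨x, hx⟩ := ih
    have key : ∃ z, F h z = z ∧ ∀ g ∈ S, F g z = z := by
      rcases le_or_gt x (F h x) with hle | hlt
      · obtain ⟨y, hy⟩ := hall h
        have hnb := fix_not_bddAbove F hmono hnofix h ⟨y, hy⟩
        rw [not_bddAbove_iff] at hnb
        obtain ⟨y', hy', hxy'⟩ := hnb x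
        exact step_lemma F hmono S h x hx hle hy' hxy'.le
      · have hle' : x ≤ F h⁻¹ x := ((F_lt_iff F hmono h x x).mp hlt).le
        obtain ⟨y, hy⟩ := hall h⁻¹
        have hnb := fix_not_bddAbove F hmono hnofix h⁻¹ ⟨y, hy⟩
        rw [not_bddAbove_iff] at hnb
        obtain ⟨y', hy', hxy'⟩ := hnb x
        obtain ⟨z, hz1, hz2⟩ := step_lemma F hmono S h⁻¹ x hx hle' hy' hxy'.le
        refine ⟨z, ?_, hz2⟩
        have := congrArg (F h) hz1
        rw [Fcomm, Finv_apply] at this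
        exact this.symm
    obtain ⟨z, hz1, hz2⟩ := key
    refine ⟨z, ?_⟩
    intro g hg
    rcases Finset.mem_insert.mp hg with rfl | hg'
    · exact hz1
    · exact hz2 g hg'

lemma exists_g0 [Group.FG G] : ∃ g₀ : G, ∀ x, x < F g₀ x := by
  -- first, a fixed-point-free element
  have hfree : ∃ g : G, ∀ x, F g x ≠ x := by
    by_contra hcon
    push_neg at hcon
    obtain ⟨S, hScl, hSfin⟩ := Group.fg_iff.mp ‹Group.FG G›
    obtain ⟨x, hx⟩ := finset_fixed F hmono hnofix hcon hSfin.toFinset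
    have hfix_all : ∀ g : G, F g x = x := by
      intro g
      have hmem : g ∈ Subgroup.closure S := by rw [hScl]; trivial
      induction hmem using Subgroup.closure_induction with
      | mem g hgS => exact hx g (hSfin.mem_toFinset.mpr hgS)
      | one => exact Fone F x
      | mul a b _ _ ha hb => rw [Fmul, hb, ha]
      | inv a _ ha => rw [← ha, Finv_apply, ha]
    obtain ⟨g, hg⟩ := hnofix x
    exact hg (hfix_all g)
  obtain ⟨g₁, hg₁⟩ := hfree
  -- constant sign
  rcases le_or_gt (F g₁ 0) 0 with hsign | hsign
  · refine ⟨g₁⁻¹, fun x => ?_⟩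
    rw [← F_lt_iff F hmono g₁ x x]
    by_contra hcon
    push_neg at hcon
    have h0 : F g₁ 0 - 0 < 0 := lt_of_le_of_ne (by simpa using hsign) (by simpa using hg₁ 0)
    have hx : 0 < F g₁ x - x := by
      have := lt_of_le_of_ne hcon (Ne.symm (hg₁ x))
      linarith
    have hcontf : Continuous (fun w => F g₁ w - w) := (Fcont F hmono g₁).sub continuous_id
    have h02 := intermediate_value_univ 0 x hcontf
    have : (0:ℝ) ∈ Icc (F g₁ 0 - 0) (F g₁ x - x) := ⟨h0.le, hx.le⟩
    obtain ⟨c, hc⟩ := h02 this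
    have hc' : F g₁ c - c = 0 := hc
    exact hg₁ c (by linarith)
  · refine ⟨g₁, fun x => ?_⟩
    by_contra hcon
    push_neg at hcon
    have hx : F g₁ x - x < 0 := lt_of_le_of_ne (by linarith) (by simpa [sub_eq_zero] using hg₁ x)
    have h0 : 0 < F g₁ 0 - 0 := by simpa using hsign
    have hcontf : Continuous (fun w => F g₁ w - w) := (Fcont F hmono g₁).sub continuous_id
    have h02 := intermediate_value_univ x 0 hcontf
    have : (0:ℝ) ∈ Icc (F g₁ x - x) (F g₁ 0 - 0) := ⟨hx.le, by linarith⟩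
    obtain ⟨c, hc⟩ := h02 this
    have hc' : F g₁ c - c = 0 := hc
    exact hg₁ c (by linarith)

section Psi

omit hnofix
variable (g₀ : G) (hg₀ : ∀ x : ℝ, x < F g₀ x)

/-- the `ψ` function: orbit of `0` under powers of `g₀` -/
noncomputable def psi (k : ℤ) : ℝ := F (g₀ ^ k) 0

include hmono hg₀

set_option linter.unusedSectionVars false

lemma lt_F_pow (n : ℕ) (hn : 1 ≤ n) (x : ℝ) : x < F (g₀ ^ n) x := by
  induction n with
  | zero => omega
  | succ n ih =>
    rcases Nat.eq_or_lt_of_le hn with h1 | h2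
    · simpa [← h1, pow_one] using hg₀ x
    · have hn' : 1 ≤ n := by omega
      calc x < F (g₀ ^ n) x := ih hn'
      _ < F g₀ (F (g₀ ^ n) x) := hg₀ _
      _ = F (g₀ ^ (n + 1)) x := by rw [← Fmul, pow_succ']

lemma psi_strictMono : StrictMono (psi F g₀) := by
  intro k l hkl
  have h1 : psi F g₀ l = F (g₀ ^ (l - k)) (psi F g₀ k) := by
    unfold psi
    rw [← Fmul, ← zpow_add, sub_add_cancel]
  have h2 : g₀ ^ (l - k) = g₀ ^ ((l - k).toNat) := by
    rw [← zpow_natCast, Int.toNat_of_nonneg (by omega)]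
  have h3 : 1 ≤ (l - k).toNat := by omega
  rw [h1, h2]
  exact lt_F_pow F hmono g₀ hg₀ _ h3 _

lemma psi_zero : psi F g₀ 0 = 0 := by simp [psi, Fone]

lemma psi_succ (k : ℤ) : psi F g₀ (k + 1) = F g₀ (psi F g₀ k) := by
  unfold psi
  rw [← Fmul, ← zpow_one_add, add_comm]

lemma exists_lt_psi (y : ℝ) : ∃ p : ℤ, y < psi F g₀ p := by
  by_contra hcon
  push_neg at hcon
  set A := Set.range (psi F g₀) with hA
  have hne : A.Nonempty := ⟨psi F g₀ 0, 0, rfl⟩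
  have hbdd : BddAbove A := ⟨y, by rintro - ⟨p, rfl⟩; exact hcon p⟩
  have hmap := Monotone.map_csSup_of_continuousAt ((Fcont F hmono g₀).continuousAt)
    (hmono g₀).monotone hne hbdd
  have himg : F g₀ '' A ⊆ A := by
    rintro - ⟨-, ⟨p, rfl⟩, rfl⟩
    exact ⟨p + 1, psi_succ F hmono g₀ hg₀ p⟩
  have hle : sSup (F g₀ '' A) ≤ sSup A :=
    csSup_le (hne.image _) (fun b hb => le_csSup hbdd (himg hb))
  have := hg₀ (sSup A)
  rw [hmap] at this
  exact absurd hle (not_le.mpr this)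

lemma exists_psi_le (y : ℝ) : ∃ p : ℤ, psi F g₀ p ≤ y := by
  by_contra hcon
  push_neg at hcon
  set A := Set.range (psi F g₀) with hA
  have hne : A.Nonempty := ⟨psi F g₀ 0, 0, rfl⟩
  have hbdd : BddBelow A := ⟨y, by rintro - ⟨p, rfl⟩; exact (hcon p).le⟩
  have hmap := Monotone.map_csInf_of_continuousAt ((Fcont F hmono g₀⁻¹).continuousAt)
    (hmono g₀⁻¹).monotone hne hbdd
  have himg : F g₀⁻¹ '' A ⊆ A := by
    rintro - ⟨-, ⟨p, rfl⟩, rfl⟩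
    refine ⟨p - 1, ?_⟩
    have := psi_succ F hmono g₀ hg₀ (p - 1)
    rw [sub_add_cancel] at this
    rw [this, Finv_apply]
  have hge : sInf A ≤ sInf (F g₀⁻¹ '' A) :=
    le_csInf (hne.image _) (fun b hb => csInf_le hbdd (himg hb))
  have hlt : F g₀⁻¹ (sInf A) < sInf A := by
    have := hg₀ (F g₀⁻¹ (sInf A))
    rw [Fcomm, Finv_apply] at this
    exact this
  rw [← hmap] at hge
  exact absurd hge (not_le.mpr hlt)

lemma exists_floor (y : ℝ) : ∃ k : ℤ, psi F g₀ k ≤ y ∧ y < psi F g₀ (k + 1) := by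
  obtain ⟨m, hm⟩ := exists_lt_psi F hmono g₀ hg₀ y
  have hbdd : ∀ p : ℤ, psi F g₀ p ≤ y → p ≤ m := by
    intro p hp
    by_contra hc
    push_neg at hc
    exact absurd (le_trans (psi_strictMono F hmono g₀ hg₀ hc).le hp) (not_le.mpr hm)
  obtain ⟨p₀, hp₀⟩ := exists_psi_le F hmono g₀ hg₀ y
  obtain ⟨k, hk1, hk2⟩ := Int.exists_greatest_of_bdd ⟨m, hbdd⟩ ⟨p₀, hp₀⟩
  refine ⟨k, hk1, ?_⟩
  by_contra hc
  push_neg at hc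
  have := hk2 (k + 1) hc
  omega

end Psi


section Uniq

omit hnofix
set_option linter.unusedSectionVars false

/-- signed measure of the interval from `a` to `b` -/
noncomputable def dd (μ : Measure ℝ) (a b : ℝ) : ℝ :=
  if a ≤ b then (μ (Set.Ico a b)).toReal else -(μ (Set.Ico b a)).toReal

variable (μ : Measure ℝ) (hfin : ∀ x y : ℝ, μ (Set.Ico x y) < ⊤)
  (hinv : ∀ g : G, MeasurePreserving (F g) μ μ)
include hmono hfin hinv

lemma m_add {a b c : ℝ} (hab : a ≤ b) (hbc : b ≤ c) :
    (μ (Set.Ico a b)).toReal + (μ (Set.Ico b c)).toReal = (μ (Set.Ico a c)).toReal := by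
  rw [← ENNReal.toReal_add (hfin a b).ne (hfin b c).ne,
    ← measure_union Set.Ico_disjoint_Ico_same measurableSet_Ico,
    Set.Ico_union_Ico_eq_Ico hab hbc]

lemma dd_self (a : ℝ) : dd μ a a = 0 := by simp [dd]

lemma dd_neg (a b : ℝ) : dd μ a b = - dd μ b a := by
  unfold dd
  rcases le_or_gt a b with h | h
  · rcases le_or_gt b a with h' | h'
    · have : a = b := le_antisymm h h'
      subst this
      simp
    · rw [if_pos h, if_neg (not_le.mpr h'), neg_neg]
  · rw [if_neg (not_le.mpr h), if_pos h.le]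

lemma dd_add (a b c : ℝ) : dd μ a b + dd μ b c = dd μ a c := by
  have M : ∀ {a b c : ℝ}, a ≤ b → b ≤ c →
      (μ (Set.Ico a b)).toReal + (μ (Set.Ico b c)).toReal = (μ (Set.Ico a c)).toReal :=
    fun h1 h2 => m_add F hmono μ hfin hinv h1 h2
  unfold dd
  rcases le_or_gt a b with h1 | h1 <;> rcases le_or_gt b c with h2 | h2 <;>
    rcases le_or_gt a c with h3 | h3
  · rw [if_pos h1, if_pos h2, if_pos h3]; exact M h1 h2
  · exact absurd (le_trans h1 h2) (not_le.mpr h3)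
  · rw [if_pos h1, if_neg (not_le.mpr h2), if_pos h3]
    have := M h3 h2.le
    linarith
  · rw [if_pos h1, if_neg (not_le.mpr h2), if_neg (not_le.mpr h3)]
    have := M h3.le h1
    linarith
  · rw [if_neg (not_le.mpr h1), if_pos h2, if_pos h3]
    have := M h1.le h3
    linarith
  · rw [if_neg (not_le.mpr h1), if_pos h2, if_neg (not_le.mpr h3)]
    have := M h2 h3.le
    linarith
  · exact absurd h3 (not_le.mpr (h2.trans h1))
  · rw [if_neg (not_le.mpr h1), if_neg (not_le.mpr h2), if_neg (not_le.mpr h3)]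
    have := M h2.le h1.le
    linarith

lemma dd_nonneg {a b : ℝ} (h : a ≤ b) : 0 ≤ dd μ a b := by
  rw [dd, if_pos h]
  exact ENNReal.toReal_nonneg

lemma dd_mono {a b c : ℝ} (h : b ≤ c) : dd μ a b ≤ dd μ a c := by
  have := dd_add F hmono μ hfin hinv a b c
  have := dd_nonneg F hmono μ hfin hinv h
  linarith

lemma preimage_Ico (g : G) (a b : ℝ) :
    (⇑(F g)) ⁻¹' (Set.Ico (F g a) (F g b)) = Set.Ico a b := by
  ext x
  simp only [Set.mem_preimage, Set.mem_Ico]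
  rw [(hmono g).le_iff_le, (hmono g).lt_iff_lt]

lemma dd_invariant (g : G) (a b : ℝ) : dd μ (F g a) (F g b) = dd μ a b := by
  have key : ∀ u v : ℝ, μ (Set.Ico (F g u) (F g v)) = μ (Set.Ico u v) := by
    intro u v
    have h := (hinv g).measure_preimage
      ((measurableSet_Ico (a := F g u) (b := F g v)).nullMeasurableSet)
    rw [preimage_Ico F hmono μ hfin hinv g u v] at h
    exact h.symm
  unfold dd
  rcases le_or_gt a b with h | h
  · rw [if_pos h, if_pos ((hmono g).le_iff_le.mpr h), key]
  · rw [if_neg (not_le.mpr h), if_neg (fun hc => absurd ((hmono g).le_iff_le.mp hc) (not_le.mpr h)), key]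

lemma dd_base_indep (a : G) (x y : ℝ) : dd μ x (F a x) = dd μ y (F a y) := by
  have h1 : dd μ x y + dd μ y (F a y) = dd μ x (F a y) := dd_add F hmono μ hfin hinv x y (F a y)
  have h2 : dd μ x (F a y) + dd μ (F a y) (F a x) = dd μ x (F a x) :=
    dd_add F hmono μ hfin hinv x (F a y) (F a x)
  have h3 : dd μ (F a y) (F a x) = dd μ y x := dd_invariant F hmono μ hfin hinv a y x
  have h4 : dd μ y x = - dd μ x y := dd_neg F hmono μ hfin hinv y x
  linarith

/-- the translation number of `g` relative to `μ` -/
noncomputable def TT (μ : Measure ℝ) (g : G) : ℝ := dd μ 0 (F g 0)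

lemma TT_mul (a b : G) : TT F μ (a * b) = TT F μ a + TT F μ b := by
  unfold TT
  have h1 : dd μ 0 (F b 0) + dd μ (F b 0) (F (a * b) 0) = dd μ 0 (F (a * b) 0) :=
    dd_add F hmono μ hfin hinv 0 (F b 0) (F (a * b) 0)
  have h2 : dd μ (F b 0) (F (a * b) 0) = dd μ 0 (F a 0) := by
    rw [Fmul]
    exact (dd_base_indep F hmono μ hfin hinv a 0 (F b 0)).symm
  linarith

lemma TT_one : TT F μ 1 = 0 := by
  unfold TT
  rw [Fone]
  exact dd_self F hmono μ hfin hinv 0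

lemma TT_inv (a : G) : TT F μ a⁻¹ = - TT F μ a := by
  have := TT_mul F hmono μ hfin hinv a a⁻¹
  rw [mul_inv_cancel, TT_one F hmono μ hfin hinv] at this
  linarith

lemma TT_zpow (a : G) (k : ℤ) : TT F μ (a ^ k) = k * TT F μ a := by
  induction k using Int.induction_on with
  | zero => simpa using TT_one F hmono μ hfin hinv
  | succ n ih =>
    rw [zpow_add_one, TT_mul F hmono μ hfin hinv, ih]
    push_cast
    ring
  | pred n ih =>
    rw [zpow_sub_one, TT_mul F hmono μ hfin hinv, ih, TT_inv F hmono μ hfin hinv]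
    push_cast
    ring

lemma TT_pow (a : G) (n : ℕ) : TT F μ (a ^ n) = n * TT F μ a := by
  have := TT_zpow F hmono μ hfin hinv a (n : ℤ)
  rwa [zpow_natCast, Int.cast_natCast] at this

variable (g₀ : G) (hg₀ : ∀ x : ℝ, x < F g₀ x)
include hg₀

lemma dd_psi (k : ℤ) : dd μ 0 (psi F g₀ k) = k * TT F μ g₀ := by
  have : dd μ 0 (psi F g₀ k) = TT F μ (g₀ ^ k) := by
    unfold TT psi
    rfl
  rw [this, TT_zpow F hmono μ hfin hinv]

lemma TT_g₀_pos (hμ : μ ≠ 0) : 0 < TT F μ g₀ := by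
  have hψ1 : (0:ℝ) < psi F g₀ 1 := by
    have := psi_strictMono F hmono g₀ hg₀ (show (0:ℤ) < 1 by norm_num)
    rwa [psi_zero F hmono g₀ hg₀] at this
  have hψ1' : psi F g₀ 1 = F g₀ 0 := by
    unfold psi
    rw [zpow_one]
  have hTT : TT F μ g₀ = (μ (Set.Ico 0 (psi F g₀ 1))).toReal := by
    unfold TT
    rw [dd, if_pos (by rw [← hψ1']; exact hψ1.le), hψ1']
  rw [hTT]
  rcases eq_or_ne (μ (Set.Ico 0 (psi F g₀ 1))) 0 with h0 | hpos
  · exfalso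
    have htrans : ∀ k : ℤ, μ (Set.Ico (psi F g₀ k) (psi F g₀ (k + 1))) = 0 := by
      intro k
      have e1 : psi F g₀ k = F (g₀ ^ k) 0 := rfl
      have e2 : psi F g₀ (k + 1) = F (g₀ ^ k) (psi F g₀ 1) := by
        unfold psi
        rw [← Fmul, ← zpow_add, add_comm]
      have h := (hinv (g₀ ^ k)).measure_preimage
        ((measurableSet_Ico (a := psi F g₀ k) (b := psi F g₀ (k+1))).nullMeasurableSet)
      rw [e1, e2, preimage_Ico F hmono μ hfin hinv (g₀ ^ k) 0 (psi F g₀ 1)] at h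
      rw [e1, e2, ← h, h0]
    have hcover : Set.univ ⊆ ⋃ k : ℤ, Set.Ico (psi F g₀ k) (psi F g₀ (k + 1)) := by
      intro y _
      obtain ⟨k, hk1, hk2⟩ := exists_floor F hmono g₀ hg₀ y
      exact Set.mem_iUnion.mpr ⟨k, hk1, hk2⟩
    have h0univ : μ Set.univ = 0 :=
      measure_mono_null hcover (measure_iUnion_null htrans)
    exact hμ (Measure.measure_univ_eq_zero.mp h0univ)
  · exact ENNReal.toReal_pos hpos (hfin _ _).ne

lemma TT_bounds (g : G) (n : ℕ) (k : ℤ) (h1 : psi F g₀ k ≤ F (g ^ n) 0)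
    (h2 : F (g ^ n) 0 < psi F g₀ (k + 1)) :
    (k : ℝ) * TT F μ g₀ ≤ n * TT F μ g ∧ n * TT F μ g ≤ (k + 1 : ℝ) * TT F μ g₀ := by
  have hn : (n : ℝ) * TT F μ g = dd μ 0 (F (g ^ n) 0) := by
    rw [← TT_pow F hmono μ hfin hinv]
    rfl
  have hlow : dd μ 0 (psi F g₀ k) ≤ dd μ 0 (F (g ^ n) 0) :=
    dd_mono F hmono μ hfin hinv h1
  have hhigh : dd μ 0 (F (g ^ n) 0) ≤ dd μ 0 (psi F g₀ (k + 1)) :=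
    dd_mono F hmono μ hfin hinv h2.le
  rw [dd_psi F hmono μ hfin hinv g₀ hg₀ k] at hlow
  rw [dd_psi F hmono μ hfin hinv g₀ hg₀ (k + 1)] at hhigh
  rw [hn]
  push_cast at hhigh ⊢
  exact ⟨hlow, hhigh⟩

omit μ hfin hinv

lemma dd_ratio (μ₁ μ₂ : Measure ℝ)
    (hμ₁ : μ₁ ≠ 0) (hfin₁ : ∀ x y : ℝ, μ₁ (Set.Ico x y) < ⊤)
    (hinv₁ : ∀ g : G, MeasurePreserving (F g) μ₁ μ₁)
    (hμ₂ : μ₂ ≠ 0) (hfin₂ : ∀ x y : ℝ, μ₂ (Set.Ico x y) < ⊤)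
    (hinv₂ : ∀ g : G, MeasurePreserving (F g) μ₂ μ₂) :
    ∃ c : ℝ, 0 < c ∧ ∀ (g : G) (x : ℝ), dd μ₁ x (F g x) = c * dd μ₂ x (F g x) := by
  set a1 := TT F μ₁ g₀ with ha1def
  set a2 := TT F μ₂ g₀ with ha2def
  have ha1 : 0 < a1 := TT_g₀_pos F hmono μ₁ hfin₁ hinv₁ g₀ hg₀ hμ₁
  have ha2 : 0 < a2 := TT_g₀_pos F hmono μ₂ hfin₂ hinv₂ g₀ hg₀ hμ₂
  refine ⟨a1 / a2, div_pos ha1 ha2, ?_⟩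
  intro g x
  set t1 := TT F μ₁ g with ht1def
  set t2 := TT F μ₂ g with ht2def
  have hbase1 : dd μ₁ x (F g x) = t1 :=
    dd_base_indep F hmono μ₁ hfin₁ hinv₁ g x 0
  have hbase2 : dd μ₂ x (F g x) = t2 :=
    dd_base_indep F hmono μ₂ hfin₂ hinv₂ g x 0
  have key : t1 * a2 = t2 * a1 := by
    have habs : ∀ n : ℕ, |(n : ℝ) * (t1 * a2 - t2 * a1)| ≤ a1 * a2 := by
      intro n
      obtain ⟨k, hk1, hk2⟩ := exists_floor F hmono g₀ hg₀ (F (g ^ n) 0)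
      obtain ⟨hl1, hh1⟩ := TT_bounds F hmono μ₁ hfin₁ hinv₁ g₀ hg₀ g n k hk1 hk2
      obtain ⟨hl2, hh2⟩ := TT_bounds F hmono μ₂ hfin₂ hinv₂ g₀ hg₀ g n k hk1 hk2
      rw [abs_le]
      constructor <;> nlinarith
    by_contra he
    have he' : t1 * a2 - t2 * a1 ≠ 0 := fun h => he (by linarith)
    have habspos : 0 < |t1 * a2 - t2 * a1| := abs_pos.mpr he'
    obtain ⟨n, hn⟩ := exists_nat_gt ((a1 * a2) / |t1 * a2 - t2 * a1|)
    rw [div_lt_iff₀ habspos] at hn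
    have := habs n
    rw [abs_mul, Nat.abs_cast] at this
    linarith
  rw [hbase1, hbase2]
  field_simp
  linarith

end Uniq


section Tau

omit hnofix
set_option linter.unusedSectionVars false

variable (g₀ : G) (hg₀ : ∀ x : ℝ, x < F g₀ x)

/-- the set of rational approximations to the translation number of `g` -/
def TSet (g : G) : Set ℝ :=
  {r | ∃ (p : ℤ) (q : ℕ), 1 ≤ q ∧ r = (p : ℝ) / (q : ℝ) ∧ psi F g₀ p ≤ F (g ^ q) 0}

/-- the translation number of `g` relative to `g₀` -/
noncomputable def tau (g : G) : ℝ := sSup (TSet F g₀ g)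

include hmono hg₀

lemma iter_psi_le (g : G) (p : ℤ) (q : ℕ) (h : psi F g₀ p ≤ F (g ^ q) 0) (s : ℕ) :
    psi F g₀ (p * s) ≤ F (g ^ (q * s)) 0 := by
  have h0 := iter_le F hmono (g := g₀ ^ p) (h := g ^ q) (x := 0) h s
  have e1 : (g₀ ^ p) ^ s = g₀ ^ (p * s) := by
    rw [← zpow_natCast (g₀ ^ p) s, ← zpow_mul]
  have e2 : (g ^ q) ^ s = g ^ (q * s) := (pow_mul g q s).symm
  rw [e1, e2] at h0
  exact h0

lemma iter_le_psi (g : G) (p : ℤ) (q : ℕ) (h : F (g ^ q) 0 ≤ psi F g₀ p) (s : ℕ) :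
    F (g ^ (q * s)) 0 ≤ psi F g₀ (p * s) := by
  have h0 := iter_le F hmono (g := g ^ q) (h := g₀ ^ p) (x := 0) h s
  have e1 : (g₀ ^ p) ^ s = g₀ ^ (p * s) := by
    rw [← zpow_natCast (g₀ ^ p) s, ← zpow_mul]
  have e2 : (g ^ q) ^ s = g ^ (q * s) := (pow_mul g q s).symm
  rw [e1, e2] at h0
  exact h0

lemma TSet_nonempty (g : G) : (TSet F g₀ g).Nonempty := by
  obtain ⟨p, hp⟩ := exists_psi_le F hmono g₀ hg₀ (F (g ^ 1) 0)
  exact ⟨(p : ℝ) / 1, p, 1, le_refl 1, by norm_num, hp⟩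

lemma TSet_bddAbove (g : G) : BddAbove (TSet F g₀ g) := by
  obtain ⟨m, hm⟩ := exists_lt_psi F hmono g₀ hg₀ (F g 0)
  refine ⟨(m : ℝ), ?_⟩
  rintro - ⟨p, q, hq, rfl, hpq⟩
  have h1 : F (g ^ 1) 0 ≤ psi F g₀ (m * 1) := by
    simpa using hm.le
  have h2 : F (g ^ (1 * q)) 0 ≤ psi F g₀ ((m * 1) * q) :=
    iter_le_psi F hmono g₀ hg₀ g (m * 1) 1 h1 q
  rw [one_mul, mul_one] at h2
  have h3 : psi F g₀ p ≤ psi F g₀ (m * q) := le_trans hpq h2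
  have h4 : p ≤ m * q := (psi_strictMono F hmono g₀ hg₀).le_iff_le.mp h3
  have hq' : (0:ℝ) < (q : ℝ) := by exact_mod_cast hq
  rw [div_le_iff₀ hq']
  calc ((p : ℝ)) ≤ ((m * q : ℤ) : ℝ) := by exact_mod_cast h4
  _ = (m : ℝ) * (q : ℝ) := by push_cast; ring

lemma tau_le_of_upper (g : G) (p : ℤ) (q : ℕ) (hq : 1 ≤ q)
    (h : F (g ^ q) 0 ≤ psi F g₀ p) : tau F g₀ g ≤ (p : ℝ) / (q : ℝ) := by
  apply csSup_le (TSet_nonempty F hmono g₀ hg₀ g)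
  rintro - ⟨r, s, hs, rfl, hrs⟩
  have c1 : psi F g₀ (r * q) ≤ F (g ^ (s * q)) 0 := iter_psi_le F hmono g₀ hg₀ g r s hrs q
  have c2 : F (g ^ (q * s)) 0 ≤ psi F g₀ (p * s) := iter_le_psi F hmono g₀ hg₀ g p q h s
  rw [mul_comm q s] at c2
  have h3 : r * q ≤ p * s := (psi_strictMono F hmono g₀ hg₀).le_iff_le.mp (le_trans c1 c2)
  have hq' : (0:ℝ) < (q : ℝ) := by exact_mod_cast hq
  have hs' : (0:ℝ) < (s : ℝ) := by exact_mod_cast hs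
  rw [div_le_div_iff₀ hs' hq']
  calc (r : ℝ) * q = ((r * q : ℤ) : ℝ) := by push_cast; ring
  _ ≤ ((p * s : ℤ) : ℝ) := by exact_mod_cast h3
  _ = (p : ℝ) * s := by push_cast; ring

lemma le_tau_of_lower (g : G) (p : ℤ) (q : ℕ) (hq : 1 ≤ q)
    (h : psi F g₀ p ≤ F (g ^ q) 0) : (p : ℝ) / (q : ℝ) ≤ tau F g₀ g :=
  le_csSup (TSet_bddAbove F hmono g₀ hg₀ g) ⟨p, q, hq, rfl, h⟩

lemma tau_superadd (g h : G) : tau F g₀ g + tau F g₀ h ≤ tau F g₀ (g * h) := by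
  have core : ∀ r ∈ TSet F g₀ g, ∀ s ∈ TSet F g₀ h, r + s ≤ tau F g₀ (g * h) := by
    rintro - ⟨p, q, hq, rfl, hpq⟩ - ⟨u, v, hv, rfl, huv⟩
    have c1 : psi F g₀ (p * v) ≤ F (g ^ (q * v)) 0 := iter_psi_le F hmono g₀ hg₀ g p q hpq v
    have c2 : psi F g₀ (u * q) ≤ F (h ^ (v * q)) 0 := iter_psi_le F hmono g₀ hg₀ h u v huv q
    rw [mul_comm v q] at c2
    have key : psi F g₀ (p * v + u * q) ≤ F ((g * h) ^ (q * v)) 0 := by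
      have e : (g * h) ^ (q * v) = g ^ (q * v) * h ^ (q * v) := mul_pow g h (q * v)
      rw [e, Fmul]
      calc psi F g₀ (p * v + u * q) = F (g₀ ^ (u * q)) (psi F g₀ (p * v)) := by
            unfold psi
            rw [← Fmul, ← zpow_add, add_comm]
      _ ≤ F (g₀ ^ (u * q)) (F (g ^ (q * v)) 0) := (hmono (g₀ ^ (u * q))).monotone c1
      _ = F (g ^ (q * v)) (F (g₀ ^ (u * q)) 0) := Fcomm F _ _ 0
      _ ≤ F (g ^ (q * v)) (F (h ^ (q * v)) 0) := (hmono (g ^ (q * v))).monotone c2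
    have hqv : 1 ≤ q * v := Nat.one_le_iff_ne_zero.mpr (by positivity)
    have := le_tau_of_lower F hmono g₀ hg₀ (g * h) (p * v + u * q) (q * v) hqv key
    have hq' : (0:ℝ) < (q : ℝ) := by exact_mod_cast hq
    have hv' : (0:ℝ) < (v : ℝ) := by exact_mod_cast hv
    have heq : ((p * v + u * q : ℤ) : ℝ) / ((q * v : ℕ) : ℝ) = (p : ℝ) / q + (u : ℝ) / v := by
      push_cast
      field_simp
    rwa [heq] at this
  have h1 : tau F g₀ g ≤ tau F g₀ (g * h) - tau F g₀ h := by
    apply csSup_le (TSet_nonempty F hmono g₀ hg₀ g)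
    intro r hr
    have h2 : tau F g₀ h ≤ tau F g₀ (g * h) - r := by
      apply csSup_le (TSet_nonempty F hmono g₀ hg₀ h)
      intro s hs
      linarith [core r hr s hs]
    linarith
  linarith

lemma flip_le (g : G) (p : ℤ) (q : ℕ) (h : F (g ^ q) 0 ≤ psi F g₀ p) :
    psi F g₀ (-p) ≤ F (g⁻¹ ^ q) 0 := by
  have h1 : (0:ℝ) ≤ F ((g ^ q)⁻¹) (psi F g₀ p) := (F_le_iff F hmono (g ^ q) 0 _).mp h
  have h2 : F ((g ^ q)⁻¹) (psi F g₀ p) = F (g₀ ^ p) (F (g⁻¹ ^ q) 0) := by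
    rw [← inv_pow]
    unfold psi
    rw [← Fmul, ← Fmul, mul_comm]
  rw [h2] at h1
  have h3 := (hmono (g₀ ^ (-p : ℤ))).monotone h1
  rw [show (g₀ ^ (-p : ℤ)) = (g₀ ^ (p : ℤ))⁻¹ from (zpow_neg g₀ p), Finv_apply] at h3
  calc psi F g₀ (-p) = F ((g₀ ^ (p:ℤ))⁻¹) 0 := by unfold psi; rw [zpow_neg]
  _ ≤ F (g⁻¹ ^ q) 0 := h3

lemma flip_ge (g : G) (p : ℤ) (q : ℕ) (h : psi F g₀ p ≤ F (g ^ q) 0) :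
    F (g⁻¹ ^ q) 0 ≤ psi F g₀ (-p) := by
  have h1 : F ((g ^ q)⁻¹) (psi F g₀ p) ≤ 0 := by
    rw [F_le_iff F hmono (g ^ q)⁻¹, inv_inv]
    exact h
  have h2 : F ((g ^ q)⁻¹) (psi F g₀ p) = F (g₀ ^ p) (F (g⁻¹ ^ q) 0) := by
    rw [← inv_pow]
    unfold psi
    rw [← Fmul, ← Fmul, mul_comm]
  rw [h2] at h1
  have h3 := (hmono (g₀ ^ (-p : ℤ))).monotone h1
  rw [show (g₀ ^ (-p : ℤ)) = (g₀ ^ (p : ℤ))⁻¹ from (zpow_neg g₀ p), Finv_apply] at h3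
  calc F (g⁻¹ ^ q) 0 ≤ F ((g₀ ^ (p:ℤ))⁻¹) 0 := h3
  _ = psi F g₀ (-p) := by unfold psi; rw [zpow_neg]

lemma tau_add_inv_nonpos (g : G) : tau F g₀ g + tau F g₀ g⁻¹ ≤ 0 := by
  have h1 : tau F g₀ g⁻¹ ≤ - tau F g₀ g := by
    apply csSup_le (TSet_nonempty F hmono g₀ hg₀ g⁻¹)
    rintro - ⟨p, q, hq, rfl, hpq⟩
    have h2 : F (g ^ q) 0 ≤ psi F g₀ (-p) := by
      have := flip_ge F hmono g₀ hg₀ g⁻¹ p q hpq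
      rwa [inv_inv] at this
    have h3 := tau_le_of_upper F hmono g₀ hg₀ g (-p) q hq h2
    have hq' : (0:ℝ) < (q : ℝ) := by exact_mod_cast hq
    have : ((-p : ℤ) : ℝ) / (q:ℝ) = -((p:ℝ)/(q:ℝ)) := by push_cast; ring
    rw [this] at h3
    linarith
  linarith

lemma tau_add_inv_nonneg (g : G) : 0 ≤ tau F g₀ g + tau F g₀ g⁻¹ := by
  by_contra hcon
  push_neg at hcon
  set e := -(tau F g₀ g + tau F g₀ g⁻¹) with he
  have hepos : 0 < e := by simp only [he]; linarith
  obtain ⟨q, hq⟩ := exists_nat_gt (1 / e)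
  have hq1 : 1 ≤ q := by
    by_contra hq1
    push_neg at hq1
    interval_cases q
    · simp at hq
      have : 0 < 1 / e := by positivity
      linarith
  have hq' : (0:ℝ) < (q : ℝ) := by exact_mod_cast hq1
  obtain ⟨k, hk1, hk2⟩ := exists_floor F hmono g₀ hg₀ (F (g ^ q) 0)
  -- tau g ≥ k/q and tau g⁻¹ ≥ -(k+1)/q
  have hlow := le_tau_of_lower F hmono g₀ hg₀ g k q hq1 hk1
  have hflip := flip_le F hmono g₀ hg₀ g (k + 1) q hk2.le
  have hlow2 := le_tau_of_lower F hmono g₀ hg₀ g⁻¹ (-(k+1)) q hq1 hflip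
  have hcast : ((-(k+1) : ℤ) : ℝ) / (q:ℝ) = -(((k:ℝ)+1)/(q:ℝ)) := by push_cast; ring
  rw [hcast] at hlow2
  have hcast2 : ((k : ℤ):ℝ)/(q:ℝ) = (k:ℝ)/(q:ℝ) := rfl
  -- combine: tau g + tau g⁻¹ ≥ k/q - (k+1)/q = -1/q
  have hsum : -(1/(q:ℝ)) ≤ tau F g₀ g + tau F g₀ g⁻¹ := by
    have : (k:ℝ)/(q:ℝ) - ((k:ℝ)+1)/(q:ℝ) = -(1/(q:ℝ)) := by field_simp; ring
    linarith
  have h1q : 1 / (q:ℝ) < e := by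
    rw [div_lt_iff₀ hepos] at hq
    rw [div_lt_iff₀ hq']
    linarith [mul_comm (q:ℝ) e]
  have : -(e) = tau F g₀ g + tau F g₀ g⁻¹ := by simp [he]
  linarith

lemma tau_inv (g : G) : tau F g₀ g⁻¹ = - tau F g₀ g := by
  have h1 := tau_add_inv_nonpos F hmono g₀ hg₀ g
  have h2 := tau_add_inv_nonneg F hmono g₀ hg₀ g
  linarith

lemma tau_mul (g h : G) : tau F g₀ (g * h) = tau F g₀ g + tau F g₀ h := by
  have h1 := tau_superadd F hmono g₀ hg₀ g h
  have h2 := tau_superadd F hmono g₀ hg₀ (g * h) h⁻¹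
  rw [mul_inv_cancel_right, tau_inv F hmono g₀ hg₀ h] at h2
  linarith

lemma tau_g₀ : tau F g₀ g₀ = 1 := by
  have hpsi : psi F g₀ 1 = F (g₀ ^ (1:ℕ)) 0 := by
    unfold psi
    norm_num
  have h1 := le_tau_of_lower F hmono g₀ hg₀ g₀ 1 1 (le_refl 1) (le_of_eq hpsi)
  have h2 := tau_le_of_upper F hmono g₀ hg₀ g₀ 1 1 (le_refl 1) (ge_of_eq hpsi)
  norm_num at h1 h2
  linarith

lemma tau_le_of_point (h : G) (m : ℤ) (hb : F h 0 < psi F g₀ m) : tau F g₀ h ≤ m := by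
  have h1 : F (h ^ (1:ℕ)) 0 ≤ psi F g₀ m := by
    rw [pow_one]
    exact hb.le
  have := tau_le_of_upper F hmono g₀ hg₀ h m 1 (le_refl 1) h1
  norm_num at this
  exact this

end Tau


section Phi

omit hnofix
set_option linter.unusedSectionVars false

variable (g₀ : G) (hg₀ : ∀ x : ℝ, x < F g₀ x)

/-- set of translation numbers of group elements moving `0` at most to `x` -/
def phiSet (x : ℝ) : Set ℝ := tau F g₀ '' {h : G | F h 0 ≤ x}

/-- the semiconjugacy to a group of translations -/
noncomputable def phi (x : ℝ) : ℝ := sSup (phiSet F g₀ x)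

include hmono hg₀

lemma phiSet_nonempty (x : ℝ) : (phiSet F g₀ x).Nonempty := by
  obtain ⟨p, hp⟩ := exists_psi_le F hmono g₀ hg₀ x
  exact ⟨tau F g₀ (g₀ ^ p), ⟨g₀ ^ p, hp, rfl⟩⟩

lemma phiSet_bddAbove (x : ℝ) : BddAbove (phiSet F g₀ x) := by
  obtain ⟨m, hm⟩ := exists_lt_psi F hmono g₀ hg₀ x
  refine ⟨(m : ℝ), ?_⟩
  rintro - ⟨h, hh, rfl⟩
  exact tau_le_of_point F hmono g₀ hg₀ h m (lt_of_le_of_lt hh hm)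

lemma phi_mono : Monotone (phi F g₀) := by
  intro x y hxy
  apply csSup_le_csSup (phiSet_bddAbove F hmono g₀ hg₀ y) (phiSet_nonempty F hmono g₀ hg₀ x)
  exact Set.image_mono (fun h hh => le_trans hh hxy)

lemma phi_equivariant (g : G) (x : ℝ) :
    phi F g₀ (F g x) = tau F g₀ g + phi F g₀ x := by
  have hset : {h : G | F h 0 ≤ F g x} = (fun k => g * k) '' {k : G | F k 0 ≤ x} := by
    ext h
    constructor
    · intro hh
      refine ⟨g⁻¹ * h, ?_, by group⟩
      show F (g⁻¹ * h) 0 ≤ x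
      rw [Fmul]
      have := (hmono g⁻¹).monotone hh
      rwa [Finv_apply] at this
    · rintro ⟨k, hk, rfl⟩
      show F (g * k) 0 ≤ F g x
      rw [Fmul]
      exact (hmono g).monotone hk
  have himg : phiSet F g₀ (F g x) = (fun r => tau F g₀ g + r) '' (phiSet F g₀ x) := by
    unfold phiSet
    rw [hset, Set.image_image, Set.image_image]
    apply Set.image_congr'
    intro k
    exact tau_mul F hmono g₀ hg₀ g k
  have hcont : ContinuousAt (fun r : ℝ => tau F g₀ g + r) (sSup (phiSet F g₀ x)) :=
    (continuous_const.add continuous_id).continuousAt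
  have hmap := Monotone.map_csSup_of_continuousAt hcont
    (fun a b h => by simpa using add_le_add_left h (tau F g₀ g))
    (phiSet_nonempty F hmono g₀ hg₀ x) (phiSet_bddAbove F hmono g₀ hg₀ x)
  unfold phi
  rw [himg, ← hmap]

/-- the right-continuous regularization of `phi`, as a Stieltjes function -/
noncomputable def Phi : StieltjesFunction ℝ := (phi_mono F hmono g₀ hg₀).stieltjesFunction

lemma image_Ioi (g : G) (x : ℝ) : (⇑(F g)) '' Set.Ioi x = Set.Ioi (F g x) := by
  ext y
  constructor
  · rintro ⟨z, hz, rfl⟩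
    exact hmono g hz
  · intro hy
    refine ⟨F g⁻¹ y, (F_lt_iff F hmono g x y).mp hy, ?_⟩
    have := Finv_apply F g⁻¹ y
    rwa [inv_inv] at this

lemma Phi_equivariant (g : G) (x : ℝ) :
    Phi F hmono g₀ hg₀ (F g x) = tau F g₀ g + Phi F hmono g₀ hg₀ x := by
  have hm := phi_mono F hmono g₀ hg₀
  have h1 : Filter.Tendsto (phi F g₀) (nhdsWithin x (Set.Ioi x))
      (nhds (Function.rightLim (phi F g₀) x)) := hm.tendsto_rightLim x
  have h2 : Filter.Tendsto (fun y => phi F g₀ (F g y)) (nhdsWithin x (Set.Ioi x))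
      (nhds (tau F g₀ g + Function.rightLim (phi F g₀) x)) := by
    simp only [phi_equivariant F hmono g₀ hg₀ g]
    exact tendsto_const_nhds.add h1
  have hmapf : Filter.map (⇑(F g)) (nhdsWithin x (Set.Ioi x))
      = nhdsWithin (F g x) (Set.Ioi (F g x)) := by
    have hemb := (StrictMono.orderIsoOfSurjective (F g) (hmono g)
      (F g).surjective).toHomeomorph.isEmbedding
    have h5 := hemb.map_nhdsWithin_eq (Set.Ioi x) x
    have hco : ⇑((StrictMono.orderIsoOfSurjective (F g) (hmono g)
        (F g).surjective).toHomeomorph) = ⇑(F g) := rfl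
    rw [hco] at h5
    rwa [image_Ioi F hmono g₀ hg₀ g x] at h5
  have h3 : Filter.Tendsto (phi F g₀) (nhdsWithin (F g x) (Set.Ioi (F g x)))
      (nhds (tau F g₀ g + Function.rightLim (phi F g₀) x)) := by
    rw [← hmapf, Filter.tendsto_map'_iff]
    exact h2
  have h4 := rightLim_eq_of_tendsto h3
  show Function.rightLim (phi F g₀) (F g x) = tau F g₀ g + Function.rightLim (phi F g₀) x
  exact h4

lemma preimage_Ioc (g : G) (a b : ℝ) :
    (⇑(F g)) ⁻¹' (Set.Ioc a b) = Set.Ioc (F g⁻¹ a) (F g⁻¹ b) := by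
  ext x
  simp only [Set.mem_preimage, Set.mem_Ioc]
  constructor
  · rintro ⟨h1, h2⟩
    refine ⟨?_, (F_le_iff F hmono g x b).mp h2⟩
    by_contra hc
    push_neg at hc
    have := (F_le_iff F hmono g x a).mpr hc
    exact absurd h1 (not_lt.mpr this)
  · rintro ⟨h1, h2⟩
    constructor
    · by_contra hc
      push_neg at hc
      have := (F_le_iff F hmono g x a).mp hc
      exact absurd h1 (not_lt.mpr this)
    · exact (F_le_iff F hmono g x b).mpr h2

lemma exists_invariant_measure :
    ∃ μ : Measure ℝ, μ ≠ 0 ∧ (∀ x y : ℝ, μ (Set.Ico x y) < ⊤) ∧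
      ∀ g : G, MeasurePreserving (F g) μ μ := by
  set Φ := Phi F hmono g₀ hg₀ with hΦ
  refine ⟨Φ.measure, ?_, ?_, ?_⟩
  · intro h0
    have h1 : Φ.measure (Set.Ioc 0 (F g₀ 0)) = ENNReal.ofReal (Φ (F g₀ 0) - Φ 0) :=
      Φ.measure_Ioc 0 (F g₀ 0)
    rw [Phi_equivariant F hmono g₀ hg₀ g₀ 0, tau_g₀ F hmono g₀ hg₀] at h1
    simp only [hΦ, add_sub_cancel_right] at h1
    rw [h0] at h1
    simp at h1
  · intro x y
    have hsub : Set.Ico x y ⊆ Set.Ioc (x - 1) y := by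
      intro z hz
      exact ⟨by linarith [hz.1], hz.2.le⟩
    calc Φ.measure (Set.Ico x y) ≤ Φ.measure (Set.Ioc (x - 1) y) := measure_mono hsub
    _ = ENNReal.ofReal (Φ y - Φ (x - 1)) := Φ.measure_Ioc _ _
    _ < ⊤ := ENNReal.ofReal_lt_top
  · intro g
    refine ⟨(Fcont F hmono g).measurable, ?_⟩
    symm
    apply MeasureTheory.Measure.ext_of_Ioc
    intro a b hab
    rw [Measure.map_apply (Fcont F hmono g).measurable measurableSet_Ioc,
      preimage_Ioc F hmono g₀ hg₀ g a b, Φ.measure_Ioc, Φ.measure_Ioc]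
    have ea : Φ a = tau F g₀ g + Φ (F g⁻¹ a) := by
      conv_lhs => rw [show a = F g (F g⁻¹ a) from by
        have := Finv_apply F g⁻¹ a
        rw [inv_inv] at this
        exact this.symm]
      exact Phi_equivariant F hmono g₀ hg₀ g (F g⁻¹ a)
    have eb : Φ b = tau F g₀ g + Φ (F g⁻¹ b) := by
      conv_lhs => rw [show b = F g (F g⁻¹ b) from by
        have := Finv_apply F g⁻¹ b
        rw [inv_inv] at this
        exact this.symm]
      exact Phi_equivariant F hmono g₀ hg₀ g (F g⁻¹ b)
    rw [ea, eb]
    ring_nf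

end Phi

end Stmt16Aux

open Stmt16Aux in
/-- Every finitely generated abelian group of orientation-preserving homeomorphisms of an
open interval (identified with `ℝ`) without global fixed points preserves a (nonzero)
Radon measure, and the translation number homomorphisms of any two invariant Radon
measures agree up to multiplication by a positive real constant. -/
theorem stmt16 (G : Type) [CommGroup G] [Group.FG G] (F : G →* Equiv.Perm ℝ)
    (hmono : ∀ g : G, StrictMono (F g))
    (hnofix : ∀ x : ℝ, ∃ g : G, F g x ≠ x) :
    (∃ μ : Measure ℝ, μ ≠ 0 ∧ (∀ x y : ℝ, μ (Set.Ico x y) < ⊤) ∧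
        ∀ g : G, MeasurePreserving (F g) μ μ) ∧
    (∀ μ₁ μ₂ : Measure ℝ,
      μ₁ ≠ 0 → (∀ x y : ℝ, μ₁ (Set.Ico x y) < ⊤) → (∀ g : G, MeasurePreserving (F g) μ₁ μ₁) →
      μ₂ ≠ 0 → (∀ x y : ℝ, μ₂ (Set.Ico x y) < ⊤) → (∀ g : G, MeasurePreserving (F g) μ₂ μ₂) →
      ∃ c : ℝ, 0 < c ∧ ∀ (g : G) (x : ℝ),
        (if x ≤ F g x then (μ₁ (Set.Ico x (F g x))).toReal
          else -(μ₁ (Set.Ico (F g x) x)).toReal)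
        = c * (if x ≤ F g x then (μ₂ (Set.Ico x (F g x))).toReal
          else -(μ₂ (Set.Ico (F g x) x)).toReal)) := by
  obtain ⟨g₀, hg₀⟩ := exists_g0 F hmono hnofix
  constructor
  · exact exists_invariant_measure F hmono g₀ hg₀
  · intro μ₁ μ₂ hμ₁ hfin₁ hinv₁ hμ₂ hfin₂ hinv₂
    obtain ⟨c, hc, hcc⟩ := dd_ratio F hmono g₀ hg₀ μ₁ μ₂ hμ₁ hfin₁ hinv₁ hμ₂ hfin₂ hinv₂
    refine ⟨c, hc, fun g x => ?_⟩
    have := hcc g x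
    simpa [dd] using this
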